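/- Let A be a T-brace, let n be a natural number, and suppose a ∈ ζ_n(⋆,A) \ ζ(⋆,A). If a has infinite additive order, then a ⋆ a ≠ 0. -/

import Mathlib

/-!
Basic theory of left braces (skew left braces of abelian type), following
Dixon–Kurdachenko–Subbotin, "On the structure of braces whose subideals are ideals".
-/

universe u v

/-- A left brace: an abelian group `(A,+)`, a group `(A,·)`, satisfying
`a(b+c) = ab + ac - a`.  (The additive and multiplicative identities then coincide.) -/
class LeftBrace (A : Type u) extends AddCommGroup A, Group A where
  mul_add_eq : ∀ a b c : A, a * (b + c) = a * b + a * c - a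

namespace LeftBrace

variable {A : Type u} [LeftBrace A]

/-- The star operation `a ⋆ b = ab - a - b`. -/
def bstar (a b : A) : A := a * b - a - b

/-- A subset of a left brace is a subbrace if it is closed under the additive-group
and multiplicative-group operations (equivalently, it is a left brace under the
restricted operations). -/
structure IsSubbrace (S : Set A) : Prop where
  zero_mem : (0 : A) ∈ S
  add_mem : ∀ {a b : A}, a ∈ S → b ∈ S → a + b ∈ S
  neg_mem : ∀ {a : A}, a ∈ S → -a ∈ S
  mul_mem : ∀ {a b : A}, a ∈ S → b ∈ S → a * b ∈ S
  inv_mem : ∀ {a : A}, a ∈ S → a⁻¹ ∈ S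

/-- `I` is an ideal of the subbrace `J`: `I ⊆ J`, both are subbraces, and
`a ⋆ z, z ⋆ a ∈ I` for all `a ∈ J`, `z ∈ I`. -/
structure IsIdealIn (I J : Set A) : Prop where
  subset : I ⊆ J
  subbrace : IsSubbrace I
  ambient_subbrace : IsSubbrace J
  star_mem_left : ∀ a ∈ J, ∀ z ∈ I, bstar a z ∈ I
  star_mem_right : ∀ a ∈ J, ∀ z ∈ I, bstar z a ∈ I

/-- `I` is an ideal of the brace `A`. -/
def IsIdeal (I : Set A) : Prop := IsIdealIn I (Set.univ : Set A)

/-- `A` is a T-brace if being an ideal is a transitive relation: an ideal of an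
ideal of `A` is an ideal of `A`. -/
def IsTBrace (A : Type u) [LeftBrace A] : Prop :=
  ∀ I J : Set A, IsIdealIn I J → IsIdeal J → IsIdeal I

/-- The `⋆`-center `ζ(⋆,A) = {a | a ⋆ x = x ⋆ a = 0 for all x}`. -/
def starCenter (A : Type u) [LeftBrace A] : Set A :=
  {a : A | ∀ x : A, bstar a x = 0 ∧ bstar x a = 0}

/-- The preimage in `A` of the `⋆`-center of the quotient of `A` by (the ideal) `S`:
`a` belongs to it iff `a ⋆ x ∈ S` and `x ⋆ a ∈ S` for every `x ∈ A`. -/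
def nextCenter (A : Type u) [LeftBrace A] (S : Set A) : Set A :=
  {a : A | ∀ x : A, bstar a x ∈ S ∧ bstar x a ∈ S}

/-- The upper `⋆`-central series, indexed by naturals:
`ζ₀(⋆,A) = 0` and `ζ_{n+1}(⋆,A)/ζ_n(⋆,A) = ζ(⋆, A/ζ_n(⋆,A))`. -/
def zetaNat (A : Type u) [LeftBrace A] : ℕ → Set A
  | 0 => ({0} : Set A)
  | n + 1 => nextCenter A (zetaNat A n)

/-- The upper `⋆`-central series, indexed by ordinals (unions at limit ordinals). -/
noncomputable def zetaOrd (A : Type u) [LeftBrace A] (o : Ordinal.{v}) : Set A :=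
  Ordinal.limitRecOn o (({0} : Set A))
    (fun _ ih => nextCenter A ih)
    (fun o _ ih => ⋃ (o' : Ordinal) (h : o' < o), ih o' h)

/-- The upper `⋆`-hypercenter `ζ_∞(⋆,A)`: the final (stable) term of the upper
`⋆`-central series, i.e. the union of all its terms. -/
noncomputable def starHypercenter (A : Type u) [LeftBrace A] : Set A :=
  ⋃ o : Ordinal.{u}, zetaOrd A o

/-- `A` is `⋆`-hypercentral if `A = ζ_γ(⋆,A)` for some ordinal `γ`. -/
def IsStarHypercentral (A : Type u) [LeftBrace A] : Prop :=
  ∃ γ : Ordinal.{u}, zetaOrd A γ = (Set.univ : Set A)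

/-- `K ⋆ L`: the additive subgroup of `(A,+)` generated by all `x ⋆ y`, `x ∈ K`, `y ∈ L`. -/
def setStar (K L : Set A) : AddSubgroup A :=
  AddSubgroup.closure {z : A | ∃ x ∈ K, ∃ y ∈ L, z = bstar x y}

/-- `rightStarSeries A n = A^{(n+1)}`, where `A^{(1)} = A` and `A^{(n+1)} = A^{(n)} ⋆ A`. -/
def rightStarSeries (A : Type u) [LeftBrace A] : ℕ → Set A
  | 0 => (Set.univ : Set A)
  | n + 1 => ((setStar (rightStarSeries A n) (Set.univ : Set A) : AddSubgroup A) : Set A)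

/-- `leftStarSeries A n = A^{n+1}`, where `A^1 = A` and `A^{n+1} = A ⋆ A^n`. -/
def leftStarSeries (A : Type u) [LeftBrace A] : ℕ → Set A
  | 0 => (Set.univ : Set A)
  | n + 1 => ((setStar (Set.univ : Set A) (leftStarSeries A n) : AddSubgroup A) : Set A)

/-- `A` is Smoktunowicz-nilpotent if `A^{(n)} = A^k = 0` for some naturals `n, k`. -/
def IsSmoktunowiczNilpotent (A : Type u) [LeftBrace A] : Prop :=
  ∃ n k : ℕ, rightStarSeries A n = ({0} : Set A) ∧ leftStarSeries A k = ({0} : Set A)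

/-- The subbrace generated by a subset `M`: the intersection of all subbraces containing `M`. -/
def braceClosure (M : Set A) : Set A := ⋂₀ {S : Set A | IsSubbrace S ∧ M ⊆ S}

end LeftBrace


namespace BraceAux
open LeftBrace

variable {A : Type u} [LeftBrace A]

lemma one_eq_zero : (1 : A) = 0 := by
  have h := LeftBrace.mul_add_eq (1:A) 0 0
  simp only [one_mul, add_zero] at h
  have h2 : (0:A) - (0 - 1) = 0 := by rw [← h]; abel
  simpa using h2

/-- `lam a b = a*b - a`, the lambda map. -/
def lam (a b : A) : A := a * b - a

lemma lam_add (a b c : A) : lam a (b + c) = lam a b + lam a c := by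
  unfold lam; rw [LeftBrace.mul_add_eq]; abel

lemma mul_sub' (a b c : A) : a * (b - c) = a * b - a * c + a := by
  have h := LeftBrace.mul_add_eq a (b - c) c
  rw [sub_add_cancel] at h
  rw [h]; abel

lemma lam_lam (a b c : A) : lam a (lam b c) = lam (a * b) c := by
  unfold lam
  rw [mul_sub', ← mul_assoc]; abel

lemma lam_one (b : A) : lam 1 b = b := by
  unfold lam; rw [one_mul, one_eq_zero, sub_zero]

lemma lam_zero_left (b : A) : lam 0 b = b := by rw [← one_eq_zero, lam_one]

lemma lam_inv_cancel (a b : A) : lam a⁻¹ (lam a b) = b := by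
  rw [lam_lam, inv_mul_cancel, lam_one]

lemma lam_cancel_inv (a b : A) : lam a (lam a⁻¹ b) = b := by
  rw [lam_lam, mul_inv_cancel, lam_one]

lemma lam_zero (a : A) : lam a 0 = 0 := by
  have h := lam_add a 0 0
  rw [add_zero] at h
  exact (left_eq_add.mp h)

/-- `lam a` as an additive monoid hom. -/
def lamHom (a : A) : A →+ A where
  toFun := lam a
  map_zero' := lam_zero a
  map_add' := lam_add a

lemma lam_neg (a b : A) : lam a (-b) = - lam a b := (lamHom a).map_neg b

lemma lam_sub (a b c : A) : lam a (b - c) = lam a b - lam a c := (lamHom a).map_sub b c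

lemma lam_zsmul (a : A) (m : ℤ) (b : A) : lam a (m • b) = m • lam a b :=
  (lamHom a).map_zsmul m b

lemma bstar_eq (a b : A) : bstar a b = lam a b - b := rfl

lemma lam_eq (a b : A) : lam a b = bstar a b + b := by rw [bstar_eq]; abel

lemma bstar_zero_right (a : A) : bstar a 0 = 0 := by rw [bstar_eq, lam_zero, sub_zero]

lemma bstar_zero_left (b : A) : bstar 0 b = 0 := by rw [bstar_eq, lam_zero_left, sub_self]

lemma bstar_add_right (a b c : A) : bstar a (b + c) = bstar a b + bstar a c := by
  simp only [bstar_eq, lam_add]; abel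

lemma bstar_neg_right (a b : A) : bstar a (-b) = - bstar a b := by
  simp only [bstar_eq, lam_neg]; abel

lemma bstar_sub_right (a b c : A) : bstar a (b - c) = bstar a b - bstar a c := by
  simp only [bstar_eq, lam_sub]; abel

lemma bstar_zsmul_right (a : A) (m : ℤ) (b : A) : bstar a (m • b) = m • bstar a b := by
  simp only [bstar_eq, lam_zsmul, smul_sub]

lemma mul_eq_lam (a b : A) : a * b = lam a b + a := by unfold lam; abel

lemma bstar_mul_left (a b c : A) : bstar (a * b) c = lam a (bstar b c) + bstar a c := by
  simp only [bstar_eq, ← lam_lam, lam_sub]; abel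

lemma inv_eq' (a : A) : a⁻¹ = -(bstar a⁻¹ a) - a := by
  have h : lam a a⁻¹ = -a := by
    unfold lam; rw [mul_inv_cancel, one_eq_zero]; abel
  have h2 : a⁻¹ = lam a⁻¹ (-a) := by rw [← h, lam_inv_cancel]
  have h3 : lam a⁻¹ (-a) = -(bstar a⁻¹ a) - a := by rw [lam_neg, lam_eq]; abel
  exact h2.trans h3

lemma bstar_inv_left (a x : A) : bstar a⁻¹ x = - lam a⁻¹ (bstar a x) := by
  have h := bstar_mul_left a⁻¹ a x
  rw [inv_mul_cancel, one_eq_zero, bstar_zero_left] at h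
  have h2 : lam a⁻¹ (bstar a x) + bstar a⁻¹ x = 0 := h.symm
  rw [add_comm] at h2
  rw [add_eq_zero_iff_eq_neg] at h2
  exact h2

lemma add_eq_mul' (u v : A) : u + v = u * lam u⁻¹ v := by
  rw [mul_eq_lam, lam_cancel_inv, add_comm]

/-! ### Properties of the upper star-central series -/

lemma mem_zeta_succ {i : ℕ} {z : A}
    (h : z ∈ zetaNat A (i+1)) (x : A) :
    bstar z x ∈ zetaNat A i ∧ bstar x z ∈ zetaNat A i := h x

lemma mem_zeta_succ_of {i : ℕ} {z : A}
    (h : ∀ x : A, bstar z x ∈ zetaNat A i ∧ bstar x z ∈ zetaNat A i) :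
    z ∈ zetaNat A (i+1) := h

lemma zeta_props (i : ℕ) :
    ((0:A) ∈ zetaNat A i) ∧
    (∀ u v : A, u ∈ zetaNat A i → v ∈ zetaNat A i → u + v ∈ zetaNat A i) ∧
    (∀ v : A, v ∈ zetaNat A i → -v ∈ zetaNat A i) ∧
    (∀ v : A, v ∈ zetaNat A i → v⁻¹ ∈ zetaNat A i) ∧
    (∀ u v : A, u ∈ zetaNat A i → v ∈ zetaNat A i → u * v ∈ zetaNat A i) ∧
    (zetaNat A i ⊆ zetaNat A (i+1)) ∧
    (∀ u z : A, z ∈ zetaNat A i → bstar u z ∈ zetaNat A i ∧ bstar z u ∈ zetaNat A i) := by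
  induction i with
  | zero =>
    have hzero : zetaNat A 0 = ({0} : Set A) := rfl
    refine ⟨rfl, ?_, ?_, ?_, ?_, ?_, ?_⟩
    · rintro u v (rfl : u = 0) (rfl : v = 0); simp [hzero]
    · rintro v (rfl : v = 0); simp [hzero]
    · rintro v (rfl : v = 0)
      show (0:A)⁻¹ ∈ ({0} : Set A)
      rw [← one_eq_zero, inv_one]; exact rfl
    · rintro u v (rfl : u = 0) (rfl : v = 0)
      show (0:A) * 0 ∈ ({0} : Set A)
      rw [← one_eq_zero, one_mul]; exact rfl
    · rintro z (rfl : z = 0)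
      refine mem_zeta_succ_of fun x => ?_
      rw [bstar_zero_left, bstar_zero_right]; exact ⟨rfl, rfl⟩
    · rintro u z (rfl : z = 0)
      rw [bstar_zero_left, bstar_zero_right]; exact ⟨rfl, rfl⟩
  | succ i ih =>
    obtain ⟨h0, hadd, hneg, hinv, hmul, hsub, hstar⟩ := ih
    have hlam : ∀ w s : A, s ∈ zetaNat A i → lam w s ∈ zetaNat A i := by
      intro w s hs
      rw [lam_eq]
      exact hadd _ _ (hstar w s hs).1 hs
    -- star property at level i+1
    have hstar' : ∀ u z : A, z ∈ zetaNat A (i+1) →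
        bstar u z ∈ zetaNat A (i+1) ∧ bstar z u ∈ zetaNat A (i+1) := by
      intro u z hz
      exact ⟨hsub (mem_zeta_succ hz u).2, hsub (mem_zeta_succ hz u).1⟩
    -- zero
    have h0' : (0:A) ∈ zetaNat A (i+1) := by
      refine mem_zeta_succ_of fun x => ?_
      rw [bstar_zero_left, bstar_zero_right]; exact ⟨h0, h0⟩
    -- addition
    have hadd' : ∀ u v : A, u ∈ zetaNat A (i+1) → v ∈ zetaNat A (i+1) →
        u + v ∈ zetaNat A (i+1) := by
      intro u v hu hv
      refine mem_zeta_succ_of fun x => ⟨?_, ?_⟩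
      · -- bstar (u+v) x ∈ zeta i
        have hs : bstar u⁻¹ v ∈ zetaNat A i := (mem_zeta_succ hv u⁻¹).2
        have hs' : lam v⁻¹ (bstar u⁻¹ v) ∈ zetaNat A i := hlam _ _ hs
        have key : u + v = u * (v * lam v⁻¹ (bstar u⁻¹ v)) := by
          calc u + v = u * lam u⁻¹ v := add_eq_mul' u v
            _ = u * (v + bstar u⁻¹ v) := by rw [lam_eq, add_comm]
            _ = u * (v * lam v⁻¹ (bstar u⁻¹ v)) := by rw [← add_eq_mul']
        rw [key, bstar_mul_left, bstar_mul_left]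
        refine hadd _ _ (hlam _ _ (hadd _ _ (hlam _ _ ?_) ?_)) ?_
        · exact (hstar x _ hs').2
        · exact (mem_zeta_succ hv x).1
        · exact (mem_zeta_succ hu x).1
      · rw [bstar_add_right]
        exact hadd _ _ (mem_zeta_succ hu x).2 (mem_zeta_succ hv x).2
    -- inverse
    have hinv' : ∀ v : A, v ∈ zetaNat A (i+1) → v⁻¹ ∈ zetaNat A (i+1) := by
      intro v hv
      have hs : bstar v⁻¹ v ∈ zetaNat A i := (mem_zeta_succ hv v⁻¹).2
      refine mem_zeta_succ_of fun x => ⟨?_, ?_⟩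
      · rw [bstar_inv_left]
        exact hneg _ (hlam _ _ (mem_zeta_succ hv x).1)
      · rw [inv_eq' v, sub_eq_add_neg, bstar_add_right, bstar_neg_right, bstar_neg_right]
        exact hadd _ _ (hneg _ (hstar x _ hs).1) (hneg _ (mem_zeta_succ hv x).2)
    -- negation
    have hneg' : ∀ v : A, v ∈ zetaNat A (i+1) → -v ∈ zetaNat A (i+1) := by
      intro v hv
      have hs : bstar v⁻¹ v ∈ zetaNat A i := (mem_zeta_succ hv v⁻¹).2
      have key : -v = v⁻¹ + bstar v⁻¹ v := by
        nth_rewrite 1 [inv_eq' v]; abel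
      rw [key]
      exact hadd' _ _ (hinv' v hv) (hsub hs)
    -- multiplication
    have hmul' : ∀ u v : A, u ∈ zetaNat A (i+1) → v ∈ zetaNat A (i+1) →
        u * v ∈ zetaNat A (i+1) := by
      intro u v hu hv
      refine mem_zeta_succ_of fun x => ⟨?_, ?_⟩
      · rw [bstar_mul_left]
        exact hadd _ _ (hlam _ _ (mem_zeta_succ hv x).1) (mem_zeta_succ hu x).1
      · have key : u * v = bstar u v + v + u := by rw [mul_eq_lam, lam_eq]
        rw [key, bstar_add_right, bstar_add_right]
        refine hadd _ _ (hadd _ _ ?_ (mem_zeta_succ hv x).2) (mem_zeta_succ hu x).2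
        exact (hstar x _ (mem_zeta_succ hu v).1).1
    refine ⟨h0', hadd', hneg', hinv', hmul', ?_, hstar'⟩
    intro z hz
    refine mem_zeta_succ_of fun x => ?_
    exact ⟨(hstar' x z hz).2, (hstar' x z hz).1⟩

lemma zeta_zero_mem (i : ℕ) : (0:A) ∈ zetaNat A i := (zeta_props i).1
lemma zeta_add {i : ℕ} {u v : A} (hu : u ∈ zetaNat A i) (hv : v ∈ zetaNat A i) :
    u + v ∈ zetaNat A i := (zeta_props i).2.1 u v hu hv
lemma zeta_neg {i : ℕ} {v : A} (hv : v ∈ zetaNat A i) : -v ∈ zetaNat A i :=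
  (zeta_props i).2.2.1 v hv
lemma zeta_inv {i : ℕ} {v : A} (hv : v ∈ zetaNat A i) : v⁻¹ ∈ zetaNat A i :=
  (zeta_props i).2.2.2.1 v hv
lemma zeta_mul {i : ℕ} {u v : A} (hu : u ∈ zetaNat A i) (hv : v ∈ zetaNat A i) :
    u * v ∈ zetaNat A i := (zeta_props i).2.2.2.2.1 u v hu hv
lemma zeta_sub (i : ℕ) : zetaNat A i ⊆ zetaNat A (i+1) := (zeta_props i).2.2.2.2.2.1
lemma zeta_star {i : ℕ} (u : A) {z : A} (hz : z ∈ zetaNat A i) :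
    bstar u z ∈ zetaNat A i ∧ bstar z u ∈ zetaNat A i :=
  (zeta_props i).2.2.2.2.2.2 u z hz
lemma zeta_lam_mem {i : ℕ} (w : A) {s : A} (hs : s ∈ zetaNat A i) :
    lam w s ∈ zetaNat A i := by
  rw [lam_eq]; exact zeta_add (zeta_star w hs).1 hs

lemma zeta_zsmul {i : ℕ} (m : ℤ) {z : A} (hz : z ∈ zetaNat A i) :
    m • z ∈ zetaNat A i := by
  induction m using Int.induction_on with
  | zero => rw [zero_smul]; exact zeta_zero_mem i
  | succ k ihk => rw [add_smul, one_smul]; exact zeta_add ihk hz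
  | pred k ihk => rw [sub_smul, one_smul, sub_eq_add_neg]; exact zeta_add ihk (zeta_neg hz)

lemma univ_subbrace : IsSubbrace (Set.univ : Set A) :=
  ⟨trivial, fun _ _ => trivial, fun _ => trivial, fun _ _ => trivial, fun _ => trivial⟩

lemma zeta_ideal (i : ℕ) : IsIdeal (zetaNat A i) := by
  refine ⟨Set.subset_univ _, ⟨zeta_zero_mem i, fun hu hv => zeta_add hu hv,
    fun hv => zeta_neg hv, fun hu hv => zeta_mul hu hv, fun hv => zeta_inv hv⟩,
    univ_subbrace, ?_, ?_⟩
  · intro u _ z hz; exact (zeta_star u hz).1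
  · intro u _ z hz; exact (zeta_star u hz).2

/-! ### Setup with an element `a` satisfying `a ⋆ a = 0` -/

section Elt
variable {a : A} (haa : bstar a a = 0)
include haa

lemma lam_a_a : lam a a = a := by
  have := bstar_eq a a
  rw [haa] at this
  exact (sub_eq_zero.mp this.symm)

lemma lam_inv_a_a : lam a⁻¹ a = a := by
  have h := lam_inv_cancel a a
  rw [lam_a_a haa] at h
  exact h

lemma inv_a : a⁻¹ = -a := by
  have h : bstar a⁻¹ a = 0 := by
    rw [bstar_eq, lam_inv_a_a haa, sub_self]
  rw [inv_eq', h, neg_zero, zero_sub]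

lemma mul_smul_a (m : ℤ) : a * (m • a) = (m + 1) • a := by
  rw [mul_eq_lam, lam_zsmul, lam_a_a haa, add_smul, one_smul]

lemma inv_mul_smul_a (m : ℤ) : a⁻¹ * (m • a) = (m - 1) • a := by
  rw [mul_eq_lam, lam_zsmul, lam_inv_a_a haa, inv_a haa, sub_smul, one_smul, sub_eq_add_neg]

lemma lam_smul_a_a (m : ℤ) : lam (m • a) a = a := by
  induction m using Int.induction_on with
  | zero => rw [zero_smul, lam_zero_left]
  | succ k ihk =>
    rw [← mul_smul_a haa, ← lam_lam, ihk, lam_a_a haa]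
  | pred k ihk =>
    have h : (-(k:ℤ) - 1) • a = a⁻¹ * ((-(k:ℤ)) • a) := (inv_mul_smul_a haa _).symm
    rw [h, ← lam_lam, ihk, lam_inv_a_a haa]

lemma bstar_smul_a_a (m : ℤ) : bstar (m • a) a = 0 := by
  rw [bstar_eq, lam_smul_a_a haa, sub_self]

lemma inv_smul_a (m : ℤ) : (m • a)⁻¹ = (-m) • a := by
  refine inv_eq_of_mul_eq_one_right ?_
  rw [mul_eq_lam, lam_zsmul, lam_smul_a_a haa, one_eq_zero]
  rw [← add_smul]
  simp

lemma decomp (m : ℤ) (z : A) : m • a + z = (m • a) * lam ((-m) • a) z := by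
  rw [add_eq_mul', inv_smul_a haa]

end Elt

/-! ### The chain `E i = ℤa + ζ_i` -/

def Eset (a : A) (i : ℕ) : Set A := {y : A | ∃ m : ℤ, ∃ z ∈ zetaNat A i, y = m • a + z}

section Echain
variable {a : A} (haa : bstar a a = 0)
include haa

lemma E_star_a {i : ℕ} : ∀ u ∈ Eset a i, bstar u a ∈ zetaNat A i := by
  rintro u ⟨m, z, hz, rfl⟩
  rw [decomp haa, bstar_mul_left, bstar_smul_a_a haa, add_zero]
  exact zeta_lam_mem _ (zeta_star a (zeta_lam_mem _ hz)).2

lemma E_star_a_succ {i : ℕ} : ∀ u ∈ Eset a (i+1), bstar u a ∈ zetaNat A i := by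
  rintro u ⟨m, z, hz, rfl⟩
  rw [decomp haa, bstar_mul_left, bstar_smul_a_a haa, add_zero]
  have hz1 : lam ((-m) • a) z ∈ zetaNat A (i+1) := by
    rw [lam_eq]
    exact (zeta_props (i+1)).2.1 _ _ ((mem_zeta_succ hz _).2 |> zeta_sub i) hz
  exact zeta_lam_mem _ (mem_zeta_succ hz1 a).1

lemma E_subbrace (i : ℕ) : IsSubbrace (Eset a i) := by
  constructor
  · exact ⟨0, 0, zeta_zero_mem i, by simp⟩
  · rintro _ _ ⟨m, z, hz, rfl⟩ ⟨m', z', hz', rfl⟩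
    exact ⟨m + m', z + z', zeta_add hz hz', by rw [add_smul]; abel⟩
  · rintro _ ⟨m, z, hz, rfl⟩
    exact ⟨-m, -z, zeta_neg hz, by rw [neg_smul]; abel⟩
  · rintro u v ⟨m, z, hz, rfl⟩ ⟨m', z', hz', rfl⟩
    have hv : (m • a + z) * (m' • a + z')
        = (m' + m) • a + (m' • (bstar (m • a + z) a) + lam (m • a + z) z' + z) := by
      rw [mul_eq_lam, lam_add, lam_zsmul, lam_eq (m • a + z) a, smul_add, add_smul]
      abel
    refine ⟨m' + m, _, ?_, hv⟩
    exact zeta_add (zeta_add (zeta_zsmul m' (E_star_a haa _ ⟨m, z, hz, rfl⟩))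
      (zeta_lam_mem _ hz')) hz
  · rintro u ⟨m, z, hz, rfl⟩
    have hz1 : lam ((-m) • a) z ∈ zetaNat A i := zeta_lam_mem _ hz
    have hinv : (m • a + z)⁻¹
        = (-m) • a + ((-m) • bstar (lam ((-m) • a) z)⁻¹ a + (lam ((-m) • a) z)⁻¹) := by
      rw [decomp haa, mul_inv_rev, inv_smul_a haa, mul_eq_lam, lam_zsmul,
        lam_eq _ a, smul_add]
      abel
    refine ⟨-m, _, ?_, hinv⟩
    exact zeta_add (zeta_zsmul _ (zeta_star _ (zeta_inv hz1)).2) (zeta_inv hz1)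

omit haa in
lemma zeta_subset_E (i : ℕ) {z : A} (hz : z ∈ zetaNat A i) : z ∈ Eset a i :=
  ⟨0, z, hz, by rw [zero_smul, zero_add]⟩

lemma E_idealIn (i : ℕ) : IsIdealIn (Eset a i) (Eset a (i+1)) := by
  refine ⟨?_, E_subbrace haa i, E_subbrace haa (i+1), ?_, ?_⟩
  · rintro y ⟨m, z, hz, rfl⟩
    exact ⟨m, z, zeta_sub i hz, rfl⟩
  · -- bstar e f ∈ E i  for e ∈ E (i+1), f ∈ E i
    rintro e he _ ⟨j, w, hw, rfl⟩
    have h1 : bstar e (j • a + w) = j • bstar e a + bstar e w := by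
      rw [bstar_add_right, bstar_zsmul_right]
    rw [h1]
    exact zeta_subset_E i (zeta_add (zeta_zsmul j (E_star_a_succ haa e he))
      (zeta_star e hw).1)
  · -- bstar f e ∈ E i  for e ∈ E (i+1), f ∈ E i
    rintro _ ⟨m, z, hz, rfl⟩ f hf
    have h1 : bstar f (m • a + z) = m • bstar f a + bstar f z := by
      rw [bstar_add_right, bstar_zsmul_right]
    rw [h1]
    exact zeta_subset_E i (zeta_add (zeta_zsmul m (E_star_a haa f hf))
      (mem_zeta_succ hz f).2)

omit haa in
lemma E_top {n : ℕ} (han : a ∈ zetaNat A n) : Eset a n = zetaNat A n := by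
  ext y
  constructor
  · rintro ⟨m, z, hz, rfl⟩
    exact zeta_add (zeta_zsmul m han) hz
  · intro hy
    exact zeta_subset_E n hy

lemma E_ideal_zero (hT : IsTBrace A) {n : ℕ} (han : a ∈ zetaNat A n) :
    IsIdeal (Eset a 0) := by
  have htop : IsIdeal (Eset a n) := by
    rw [E_top han]; exact zeta_ideal n
  have step : ∀ j : ℕ, IsIdeal (Eset a (j+1)) → IsIdeal (Eset a j) :=
    fun j h => hT _ _ (E_idealIn haa j) h
  have hall : ∀ j : ℕ, IsIdeal (Eset a j) → IsIdeal (Eset a 0) := by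
    intro j
    induction j with
    | zero => exact id
    | succ k ih => exact fun h => ih (step k h)
  exact hall n htop

end Echain

lemma mem_E_zero {a y : A} : y ∈ Eset a 0 ↔ ∃ m : ℤ, y = m • a := by
  constructor
  · rintro ⟨m, z, (rfl : z = 0), rfl⟩
    exact ⟨m, by rw [add_zero]⟩
  · rintro ⟨m, rfl⟩
    exact ⟨m, 0, rfl, by rw [add_zero]⟩

end BraceAux


open LeftBrace BraceAux in
/-- **Lemma.** Let `A` be a T-brace, `n` a natural number and `a ∈ ζ_n(⋆,A) \ ζ(⋆,A)`.
If `a` has infinite additive order, then `a ⋆ a ≠ 0`. -/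
theorem bstar_self_ne_zero
    {A : Type u} [LeftBrace A] (hT : IsTBrace A) (n : ℕ) (a : A)
    (ha : a ∈ zetaNat A n) (haz : a ∉ starCenter A)
    (hord : ¬ IsOfFinAddOrder a) :
    bstar a a ≠ 0 := by
  intro haa
  -- the additive cyclic group generated by `a` is an ideal of `A`
  have hE0 : IsIdeal (Eset a 0) := E_ideal_zero haa hT ha
  have haE0 : a ∈ Eset a 0 := mem_E_zero.mpr ⟨1, by rw [one_smul]⟩
  -- a witness `x₀` of non-centrality
  have hx : ∃ x : A, ¬ (bstar a x = 0 ∧ bstar x a = 0) := by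
    by_contra hcon
    push_neg at hcon
    exact haz (fun x => hcon x)
  obtain ⟨x₀, hx₀⟩ := hx
  by_cases hc : bstar a x₀ = 0
  · -- case B : `x₀ ⋆ a ≠ 0`
    have hd : bstar x₀ a ≠ 0 := fun h => hx₀ ⟨hc, h⟩
    obtain ⟨d, hdeq⟩ : ∃ d : ℤ, bstar x₀ a = d • a :=
      mem_E_zero.mp (hE0.star_mem_left x₀ trivial a haE0)
    have hdne : d ≠ 0 := by
      rintro rfl
      rw [zero_smul] at hdeq
      exact hd hdeq
    have key : ∀ j : ℕ, j ≤ n → (d ^ j) • a ∈ zetaNat A (n - j) := by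
      intro j
      induction j with
      | zero => intro _; simpa using ha
      | succ k ih =>
        intro hk
        have h1 := ih (by omega)
        have heq : n - k = (n - (k+1)) + 1 := by omega
        rw [heq] at h1
        have h2 := (mem_zeta_succ h1 x₀).2
        have h3 : bstar x₀ ((d ^ k) • a) = (d ^ (k+1)) • a := by
          rw [bstar_zsmul_right, hdeq, smul_smul, ← pow_succ]
        rw [h3] at h2
        exact h2
    have hfin := key n le_rfl
    rw [Nat.sub_self] at hfin
    have hzero : (d ^ n) • a = 0 := hfin
    exact hord (isOfFinAddOrder_iff_zsmul_eq_zero.mpr ⟨d ^ n, pow_ne_zero n hdne, hzero⟩)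
  · -- case A : `a ⋆ x₀ ≠ 0`
    obtain ⟨c, hceq⟩ : ∃ c : ℤ, bstar a x₀ = c • a :=
      mem_E_zero.mp (hE0.star_mem_right x₀ trivial a haE0)
    have hcne : c ≠ 0 := by
      rintro rfl
      rw [zero_smul] at hceq
      exact hc hceq
    have bsm : ∀ m : ℤ, bstar (m • a) x₀ = (m * c) • a := by
      intro m
      induction m using Int.induction_on with
      | zero => rw [zero_smul, bstar_zero_left, zero_mul, zero_smul]
      | succ k ihk =>
        rw [← mul_smul_a haa, bstar_mul_left, ihk, lam_zsmul, lam_a_a haa, hceq,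
          ← add_smul]
        ring_nf
      | pred k ihk =>
        have h1 : (-(k:ℤ) - 1) • a = a⁻¹ * ((-(k:ℤ)) • a) := (inv_mul_smul_a haa _).symm
        rw [h1, bstar_mul_left, ihk, lam_zsmul, lam_inv_a_a haa, bstar_inv_left, hceq,
          lam_zsmul, lam_inv_a_a haa, ← neg_smul, ← add_smul]
        ring_nf
    have key : ∀ j : ℕ, j ≤ n → (c ^ j) • a ∈ zetaNat A (n - j) := by
      intro j
      induction j with
      | zero => intro _; simpa using ha
      | succ k ih =>
        intro hk
        have h1 := ih (by omega)
        have heq : n - k = (n - (k+1)) + 1 := by omega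
        rw [heq] at h1
        have h2 := (mem_zeta_succ h1 x₀).1
        have h3 : bstar ((c ^ k) • a) x₀ = (c ^ (k+1)) • a := by
          rw [bsm, ← pow_succ]
        rw [h3] at h2
        exact h2
    have hfin := key n le_rfl
    rw [Nat.sub_self] at hfin
    have hzero : (c ^ n) • a = 0 := hfin
    exact hord (isOfFinAddOrder_iff_zsmul_eq_zero.mpr ⟨c ^ n, pow_ne_zero n hcne, hzero⟩)
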